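/- For any α ∈ ℂ, the polynomials B_n^α(t) = (1/n!) ∑_{k=0}^n (ωt)_k (ω²t)_k (α+t)_{n−k} (α−t+k)_{n−k} / (k!(n−k)!) satisfy the 3-term recurrence ((n+α)³ − t³) B_n^α − (n+1)(2n² + 3n(α+1) + α² + 3α + 1) B_{n+1}^α + (n+2)²(n+1) B_{n+2}^α = 0, with B_0^α = 1 and B_1^α = α². -/

import Mathlib

open scoped BigOperators

/-- The Pochhammer symbol (rising factorial) (a)_n. -/
noncomputable def poch (a : ℂ) (n : ℕ) : ℂ := (ascPochhammer ℂ n).eval a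

/-- ω = e^{2πi/3}. -/
noncomputable def ω : ℂ := Complex.exp (2 * Real.pi * Complex.I / 3)

/-- The polynomials B_n^α(t). -/
noncomputable def Ba (α t : ℂ) (n : ℕ) : ℂ :=
  (1 / (Nat.factorial n : ℂ)) * ∑ k ∈ Finset.range (n + 1),
    poch (ω * t) k * poch (ω ^ 2 * t) k * poch (α + t) (n - k) * poch (α - t + k) (n - k)
      / ((Nat.factorial k : ℂ) * (Nat.factorial (n - k) : ℂ))

noncomputable def T (α t : ℂ) (n k : ℕ) : ℂ :=
  poch (ω * t) k * poch (ω ^ 2 * t) k * poch (α + t) (n - k) * poch (α - t + k) (n - k)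
      / ((Nat.factorial k : ℂ) * (Nat.factorial (n - k) : ℂ))
noncomputable def qp (α t N K : ℂ) : ℂ :=
  K * ((-N^2 - 2*N*α - α^2 + t^2 + 2*N^2*α + 4*N*α^2 + 2*α^3 - 2*α*t^2
        - N^2*α^2 + N^2*t^2 - 2*N*α^3 + 2*N*α*t^2 - α^4 + 2*α^2*t^2 - t^4)
      + (N + α - t + N^2 - α^2 + 2*α*t - t^2 - N^2*α - N^2*t - N*α^2 - 2*N*α*t
          - N*t^2 - 2*α^2*t + 2*t^3) * K
      + (-N - α + t + N*α + N*t + α^2 - t^2) * K^2)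
noncomputable def Gc (α t : ℂ) (n k : ℕ) : ℂ :=
  qp α t (n : ℂ) (k : ℂ) *
    (poch (ω * t) k * poch (ω ^ 2 * t) k * poch (α + t) (n - k) * poch (α - t + k) (n - k))
      / ((Nat.factorial k : ℂ) * (Nat.factorial (n + 2 - k) : ℂ))
lemma poch_zero (a : ℂ) : poch a 0 = 1 := by simp [poch]
lemma poch_one (a : ℂ) : poch a 1 = a := by simp [poch]
lemma poch_succ (a : ℂ) (n : ℕ) : poch a (n+1) = poch a n * (a + n) :=
  ascPochhammer_succ_eval n a
lemma poch_succ_left (a : ℂ) (n : ℕ) : poch a (n+1) = a * poch (a+1) n := by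
  simp [poch, ascPochhammer_succ_left, Polynomial.eval_comp]
lemma h_omega : ω^2 + ω + 1 = 0 := by
  have hp : IsPrimitiveRoot ω 3 := by
    have := Complex.isPrimitiveRoot_exp 3 (by norm_num)
    simpa [ω] using this
  have h3 : ω^3 = 1 := hp.pow_eq_one
  have hne : ω ≠ 1 := hp.ne_one (by norm_num)
  have hz : (ω - 1) * (ω^2 + ω + 1) = 0 := by linear_combination h3
  rcases mul_eq_zero.mp hz with h | h
  · exact absurd (sub_eq_zero.mp h) hne
  · exact h
lemma hmul (t x : ℂ) : (ω*t + x) * (ω^2*t + x) = x^2 - x*t + t^2 := by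
  linear_combination (t^2*(ω-1) + x*t) * h_omega
lemma fact_ne (j : ℕ) : ((Nat.factorial j : ℂ)) ≠ 0 :=
  Nat.cast_ne_zero.mpr (Nat.factorial_ne_zero j)
lemma natc_ne (j c : ℕ) (hc : 0 < c) : ((j:ℂ) + c) ≠ 0 := by
  have : (((j + c : ℕ) : ℂ)) ≠ 0 := Nat.cast_ne_zero.mpr (by omega)
  push_cast at this; exact this

set_option maxHeartbeats 1000000 in
lemma step_alg (α t X Y P Q KF MF K M : ℂ) (hKF0 : KF ≠ 0) (hMF0 : MF ≠ 0)
    (hk1 : K + 1 ≠ 0) (hm1 : M + 1 ≠ 0) (hm2 : M + 2 ≠ 0) (hm3 : M + 3 ≠ 0) :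
    ((K + M + 1 + α) ^ 3 - t ^ 3) *
        (X * Y * (P * (α + t + M)) * ((α - t + K) * Q) / (KF * ((M + 1) * MF))) -
      (2 * (K + M + 1) ^ 2 + 3 * (K + M + 1) * (α + 1) + α ^ 2 + 3 * α + 1) *
        (X * Y * (P * (α + t + M) * (α + t + (M + 1))) * ((α - t + K) * (Q * (α - t + K + 1 + M))) /
          (KF * ((M + 2) * ((M + 1) * MF)))) +
      (K + M + 1 + 2) *
        (X * Y * (P * (α + t + M) * (α + t + (M + 1)) * (α + t + (M + 2))) *
          ((α - t + K) * (Q * (α - t + K + 1 + M) * (α - t + K + 1 + (M + 1)))) /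
          (KF * ((M + 3) * ((M + 2) * ((M + 1) * MF))))) =
    qp α t (K + M + 1) (K + 1) * (X * Y * (K ^ 2 - K * t + t ^ 2) * P * Q) /
        ((K + 1) * KF * ((M + 2) * ((M + 1) * MF))) -
      qp α t (K + M + 1) K * (X * Y * (P * (α + t + M)) * ((α - t + K) * Q)) /
        (KF * ((M + 3) * ((M + 2) * ((M + 1) * MF)))) := by
  set D := KF * MF * ((K+1)*(M+1)*(M+2)*(M+3)) with hD
  have hD0 : D ≠ 0 := by
    simp only [hD]
    exact mul_ne_zero (mul_ne_zero hKF0 hMF0)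
      (mul_ne_zero (mul_ne_zero (mul_ne_zero hk1 hm1) hm2) hm3)
  have ht1 : X * Y * (P * (α + t + M)) * ((α - t + K) * Q) / (KF * ((M + 1) * MF))
      = X*Y*P*Q * ((α+t+M)*(α-t+K)*((K+1)*((M+2)*(M+3)))) / D := by
    rw [div_eq_div_iff (by exact mul_ne_zero hKF0 (mul_ne_zero hm1 hMF0)) hD0]; ring
  have ht2 : X * Y * (P * (α + t + M) * (α + t + (M + 1))) *
        ((α - t + K) * (Q * (α - t + K + 1 + M))) / (KF * ((M + 2) * ((M + 1) * MF)))
      = X*Y*P*Q * ((α+t+M)*(α+t+(M+1))*(α-t+K)*(α-t+K+1+M)*((K+1)*(M+3))) / D := by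
    rw [div_eq_div_iff (by exact mul_ne_zero hKF0 (mul_ne_zero hm2 (mul_ne_zero hm1 hMF0))) hD0]
    ring
  have ht3 : X * Y * (P * (α + t + M) * (α + t + (M + 1)) * (α + t + (M + 2))) *
        ((α - t + K) * (Q * (α - t + K + 1 + M) * (α - t + K + 1 + (M + 1)))) /
        (KF * ((M + 3) * ((M + 2) * ((M + 1) * MF))))
      = X*Y*P*Q * ((α+t+M)*(α+t+(M+1))*(α+t+(M+2))*(α-t+K)*(α-t+K+1+M)*(α-t+K+1+(M+1))*(K+1)) / D := by
    rw [div_eq_div_iff (by exact mul_ne_zero hKF0 (mul_ne_zero hm3 (mul_ne_zero hm2 (mul_ne_zero hm1 hMF0)))) hD0]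
    ring
  have ht4 : qp α t (K + M + 1) (K + 1) * (X * Y * (K ^ 2 - K * t + t ^ 2) * P * Q) /
        ((K + 1) * KF * ((M + 2) * ((M + 1) * MF)))
      = qp α t (K + M + 1) (K + 1) * (X*Y*P*Q) * ((K^2 - K*t + t^2)*(M+3)) / D := by
    rw [div_eq_div_iff (by exact mul_ne_zero (mul_ne_zero hk1 hKF0) (mul_ne_zero hm2 (mul_ne_zero hm1 hMF0))) hD0]
    ring
  have ht5 : qp α t (K + M + 1) K * (X * Y * (P * (α + t + M)) * ((α - t + K) * Q)) /
        (KF * ((M + 3) * ((M + 2) * ((M + 1) * MF))))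
      = qp α t (K + M + 1) K * (X*Y*P*Q) * ((α+t+M)*(α-t+K)*(K+1)) / D := by
    rw [div_eq_div_iff (by exact mul_ne_zero hKF0 (mul_ne_zero hm3 (mul_ne_zero hm2 (mul_ne_zero hm1 hMF0)))) hD0]
    ring
  rw [ht1, ht2, ht3, ht4, ht5]
  simp only [← mul_div_assoc]
  rw [div_sub_div_same, ← add_div, div_sub_div_same]
  congr 1
  simp only [qp]
  ring

set_option maxHeartbeats 3000000 in
/-- The termwise (WZ-style) identity. -/
lemma step (α t : ℂ) (k m : ℕ) :
    ((((k+m+1 : ℕ) : ℂ) + α) ^ 3 - t ^ 3) * T α t (k+m+1) k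
      - (2 * ((k+m+1 : ℕ) : ℂ) ^ 2 + 3 * ((k+m+1 : ℕ) : ℂ) * (α + 1) + α ^ 2 + 3 * α + 1)
          * T α t (k+m+2) k
      + (((k+m+1 : ℕ) : ℂ) + 2) * T α t (k+m+3) k
    = Gc α t (k+m+1) (k+1) - Gc α t (k+m+1) k := by
  have e1 : k+m+1-k = m+1 := by omega
  have e2 : k+m+2-k = m+2 := by omega
  have e3 : k+m+3-k = m+3 := by omega
  have e4 : k+m+1-(k+1) = m := by omega
  have e5 : k+m+1+2-(k+1) = m+2 := by omega
  have e6 : k+m+1+2-k = m+3 := by omega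
  simp only [T, Gc, e1, e2, e3, e4, e5, e6]
  have hxy : poch (ω*t) (k+1) * poch (ω^2*t) (k+1)
      = poch (ω*t) k * poch (ω^2*t) k * (((k:ℂ))^2 - (k:ℂ)*t + t^2) := by
    rw [poch_succ, poch_succ, mul_mul_mul_comm, hmul]
  have harg : α - t + ((k+1 : ℕ) : ℂ) = α - t + (k : ℂ) + 1 := by push_cast; ring
  rw [harg]
  have hq1 : poch (α - t + (k:ℂ)) (m+1) = (α - t + (k:ℂ)) * poch (α - t + (k:ℂ) + 1) m :=
    poch_succ_left _ m
  have hq2 : poch (α - t + (k:ℂ)) (m+2)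
      = (α - t + (k:ℂ)) * (poch (α - t + (k:ℂ) + 1) m * (α - t + (k:ℂ) + 1 + m)) := by
    rw [poch_succ_left, poch_succ]
  have hq3 : poch (α - t + (k:ℂ)) (m+3)
      = (α - t + (k:ℂ)) * (poch (α - t + (k:ℂ) + 1) m * (α - t + (k:ℂ) + 1 + m)
          * (α - t + (k:ℂ) + 1 + (m+1 : ℕ))) := by
    rw [poch_succ_left, poch_succ, poch_succ]
  have hp1 : poch (α + t) (m+1) = poch (α + t) m * (α + t + m) := poch_succ _ m
  have hp2 : poch (α + t) (m+2) = poch (α + t) m * (α + t + m) * (α + t + (m+1 : ℕ)) := by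
    rw [poch_succ, poch_succ]
  have hp3 : poch (α + t) (m+3) = poch (α + t) m * (α + t + m) * (α + t + (m+1 : ℕ))
      * (α + t + (m+2 : ℕ)) := by
    rw [poch_succ, poch_succ, poch_succ]
  rw [hxy, hq1, hq2, hq3, hp1, hp2, hp3]
  have f1 : ((Nat.factorial (k+1) : ℂ)) = ((k:ℂ)+1) * (Nat.factorial k : ℂ) := by
    push_cast [Nat.factorial_succ]; ring
  have f2 : ((Nat.factorial (m+1) : ℂ)) = ((m:ℂ)+1) * (Nat.factorial m : ℂ) := by
    push_cast [Nat.factorial_succ]; ring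
  have f3 : ((Nat.factorial (m+2) : ℂ)) = ((m:ℂ)+2) * (((m:ℂ)+1) * (Nat.factorial m : ℂ)) := by
    push_cast [Nat.factorial_succ]; ring
  have f4 : ((Nat.factorial (m+3) : ℂ))
      = ((m:ℂ)+3) * (((m:ℂ)+2) * (((m:ℂ)+1) * (Nat.factorial m : ℂ))) := by
    push_cast [Nat.factorial_succ]; ring
  rw [f1, f2, f3, f4]
  set X := poch (ω*t) k with hX
  set Y := poch (ω^2*t) k with hY
  set P := poch (α + t) m with hP
  set Q := poch (α - t + (k:ℂ) + 1) m with hQ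
  set KF := ((Nat.factorial k : ℂ)) with hKF
  set MF := ((Nat.factorial m : ℂ)) with hMF
  have hKF0 : KF ≠ 0 := fact_ne k
  have hMF0 : MF ≠ 0 := fact_ne m
  have hk1 : ((k:ℂ)+1) ≠ 0 := (by exact_mod_cast natc_ne k 1 one_pos)
  have hm1 : ((m:ℂ)+1) ≠ 0 := (by exact_mod_cast natc_ne m 1 one_pos)
  have hm2 : ((m:ℂ)+2) ≠ 0 := (by exact_mod_cast natc_ne m 2 two_pos)
  have hm3 : ((m:ℂ)+3) ≠ 0 := (by exact_mod_cast natc_ne m 3 three_pos)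
  push_cast
  exact step_alg α t _ _ _ _ _ _ _ _ hKF0 hMF0 hk1 hm1 hm2 hm3

set_option maxHeartbeats 1000000 in
lemma boundary (α t : ℂ) (n : ℕ) :
    Gc α t n n
      + ((((n : ℕ) : ℂ) + α) ^ 3 - t ^ 3) * T α t n n
      - (2 * ((n : ℕ) : ℂ) ^ 2 + 3 * ((n : ℕ) : ℂ) * (α + 1) + α ^ 2 + 3 * α + 1)
          * (T α t (n+1) n + T α t (n+1) (n+1))
      + (((n : ℕ) : ℂ) + 2) * (T α t (n+2) n + T α t (n+2) (n+1) + T α t (n+2) (n+2)) = 0 := by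
  have e1 : n - n = 0 := by omega
  have e2 : n + 1 - n = 1 := by omega
  have e3 : n + 2 - n = 2 := by omega
  have e4 : n + 1 - (n+1) = 0 := by omega
  have e5 : n + 2 - (n+1) = 1 := by omega
  have e6 : n + 2 - (n+2) = 0 := by omega
  have e7 : n + 2 - n = 2 := by omega
  simp only [T, Gc, e1, e2, e3, e4, e5, e6, e7]
  have hxy1 : poch (ω*t) (n+1) * poch (ω^2*t) (n+1)
      = poch (ω*t) n * poch (ω^2*t) n * (((n:ℂ))^2 - (n:ℂ)*t + t^2) := by
    rw [poch_succ, poch_succ, mul_mul_mul_comm, hmul]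
  have hxy2 : poch (ω*t) (n+2) * poch (ω^2*t) (n+2)
      = poch (ω*t) n * poch (ω^2*t) n * ((((n:ℂ))^2 - (n:ℂ)*t + t^2)
          * (((n:ℂ)+1)^2 - ((n:ℂ)+1)*t + t^2)) := by
    rw [show n+2 = (n+1)+1 from rfl, poch_succ (ω*t) (n+1), poch_succ (ω^2*t) (n+1),
      mul_mul_mul_comm, hxy1, hmul]
    push_cast; ring
  have hp2 : ∀ a : ℂ, poch a 2 = a * (a + 1) := by
    intro a
    rw [show (2:ℕ) = 1+1 from rfl, poch_succ, poch_one]; norm_num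
  have f1 : ((Nat.factorial (n+1) : ℂ)) = ((n:ℂ)+1) * (Nat.factorial n : ℂ) := by
    push_cast [Nat.factorial_succ]; ring
  have f2 : ((Nat.factorial (n+2) : ℂ))
      = ((n:ℂ)+2) * (((n:ℂ)+1) * (Nat.factorial n : ℂ)) := by
    push_cast [Nat.factorial_succ]; ring
  have hn0 : ((Nat.factorial n : ℂ)) ≠ 0 := fact_ne n
  have hn1 : ((n:ℂ)+1) ≠ 0 := by exact_mod_cast natc_ne n 1 one_pos
  have hn2 : ((n:ℂ)+2) ≠ 0 := by exact_mod_cast natc_ne n 2 two_pos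
  rw [hxy1, hxy2, f1, f2]
  simp only [poch_zero, poch_one, hp2, mul_one, Nat.factorial_zero, Nat.factorial_one,
    Nat.factorial_two, Nat.cast_ofNat, Nat.cast_one]
  simp only [qp]
  push_cast
  field_simp
  ring


lemma Ba_eq (α t : ℂ) (n : ℕ) :
    Ba α t n = (1 / (Nat.factorial n : ℂ)) * ∑ k ∈ Finset.range (n + 1), T α t n k := rfl

lemma Gc_zero (α t : ℂ) (n : ℕ) : Gc α t n 0 = 0 := by
  simp [Gc, qp]

theorem Ba_recurrence (α t : ℂ) :
    Ba α t 0 = 1 ∧ Ba α t 1 = α ^ 2 ∧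
    ∀ n : ℕ,
      (((n : ℂ) + α) ^ 3 - t ^ 3) * Ba α t n
        - ((n : ℂ) + 1) * (2 * (n : ℂ) ^ 2 + 3 * (n : ℂ) * (α + 1) + α ^ 2 + 3 * α + 1)
            * Ba α t (n + 1)
        + ((n : ℂ) + 2) ^ 2 * ((n : ℂ) + 1) * Ba α t (n + 2) = 0 := by
  refine ⟨?_, ?_, ?_⟩
  · simp [Ba, poch_zero]
  · rw [Ba]
    rw [Finset.sum_range_succ, Finset.sum_range_one]
    norm_num
    simp only [poch_zero, poch_one]
    linear_combination (t^2*(ω-1)) * h_omega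
  · intro n
    have hstep : ∀ k ∈ Finset.range n,
        ((((n : ℕ) : ℂ) + α) ^ 3 - t ^ 3) * T α t n k
          - (2 * ((n : ℕ) : ℂ) ^ 2 + 3 * ((n : ℕ) : ℂ) * (α + 1) + α ^ 2 + 3 * α + 1)
              * T α t (n+1) k
          + (((n : ℕ) : ℂ) + 2) * T α t (n+2) k
        = Gc α t n (k+1) - Gc α t n k := by
      intro k hk
      rw [Finset.mem_range] at hk
      obtain ⟨m, rfl⟩ : ∃ m, n = k + m + 1 := ⟨n - k - 1, by omega⟩
      exact step α t k m
    have hsum : ∑ k ∈ Finset.range n,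
        (((((n : ℕ) : ℂ) + α) ^ 3 - t ^ 3) * T α t n k
          - (2 * ((n : ℕ) : ℂ) ^ 2 + 3 * ((n : ℕ) : ℂ) * (α + 1) + α ^ 2 + 3 * α + 1)
              * T α t (n+1) k
          + (((n : ℕ) : ℂ) + 2) * T α t (n+2) k)
        = Gc α t n n := by
      rw [Finset.sum_congr rfl hstep, Finset.sum_range_sub (fun k => Gc α t n k), Gc_zero, sub_zero]
    have key : ((((n : ℕ) : ℂ) + α) ^ 3 - t ^ 3) * (∑ k ∈ Finset.range (n+1), T α t n k)
        - (2 * ((n : ℕ) : ℂ) ^ 2 + 3 * ((n : ℕ) : ℂ) * (α + 1) + α ^ 2 + 3 * α + 1)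
            * (∑ k ∈ Finset.range ((n+1)+1), T α t (n+1) k)
        + (((n : ℕ) : ℂ) + 2) * (∑ k ∈ Finset.range ((n+2)+1), T α t (n+2) k) = 0 := by
      rw [Finset.sum_range_succ (fun k => T α t n k) n]
      rw [Finset.sum_range_succ (fun k => T α t (n+1) k) (n+1),
        Finset.sum_range_succ (fun k => T α t (n+1) k) n]
      rw [Finset.sum_range_succ (fun k => T α t (n+2) k) (n+2),
        Finset.sum_range_succ (fun k => T α t (n+2) k) (n+1),
        Finset.sum_range_succ (fun k => T α t (n+2) k) n]
      have expand : ∀ A B C S1 S2 S3 b1 b2 b3 b4 b5 b6 : ℂ,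
          A * (S1 + b1) - B * (S2 + b2 + b3) + C * (S3 + b4 + b5 + b6)
          = (A * S1 - B * S2 + C * S3)
            + (A * b1 - B * (b2 + b3) + C * (b4 + b5 + b6)) := by intros; ring
      rw [expand, Finset.mul_sum, Finset.mul_sum, Finset.mul_sum,
        ← Finset.sum_sub_distrib, ← Finset.sum_add_distrib, hsum]
      linear_combination boundary α t n
    rw [Ba_eq, Ba_eq, Ba_eq]
    have f1 : ((Nat.factorial (n+1) : ℂ)) = ((n:ℂ)+1) * (Nat.factorial n : ℂ) := by
      push_cast [Nat.factorial_succ]; ring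
    have f2 : ((Nat.factorial (n+2) : ℂ))
        = ((n:ℂ)+2) * (((n:ℂ)+1) * (Nat.factorial n : ℂ)) := by
      rw [show n+2 = (n+1)+1 from rfl]
      push_cast [Nat.factorial_succ]; ring
    have hn0 : ((Nat.factorial n : ℂ)) ≠ 0 := fact_ne n
    have hn1 : ((n:ℂ)+1) ≠ 0 := by exact_mod_cast natc_ne n 1 one_pos
    have hn2 : ((n:ℂ)+2) ≠ 0 := by exact_mod_cast natc_ne n 2 two_pos
    rw [f1, f2]
    set D := ((n:ℂ)+2) * (((n:ℂ)+1) * (Nat.factorial n : ℂ)) with hD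
    have hD0 : D ≠ 0 := mul_ne_zero hn2 (mul_ne_zero hn1 hn0)
    have b1 : 1 / (Nat.factorial n : ℂ) * (∑ k ∈ Finset.range (n+1), T α t n k)
        = (((n:ℂ)+2) * (((n:ℂ)+1) * (∑ k ∈ Finset.range (n+1), T α t n k))) / D := by
      rw [one_div_mul_eq_div, div_eq_div_iff hn0 hD0]; ring
    have b2 : 1 / (((n:ℂ)+1) * (Nat.factorial n : ℂ)) * (∑ k ∈ Finset.range ((n+1)+1), T α t (n+1) k)
        = (((n:ℂ)+2) * (∑ k ∈ Finset.range ((n+1)+1), T α t (n+1) k)) / D := by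
      rw [one_div_mul_eq_div, div_eq_div_iff (mul_ne_zero hn1 hn0) hD0]; ring
    have b3 : 1 / (((n:ℂ)+2) * (((n:ℂ)+1) * (Nat.factorial n : ℂ))) * (∑ k ∈ Finset.range ((n+2)+1), T α t (n+2) k)
        = (∑ k ∈ Finset.range ((n+2)+1), T α t (n+2) k) / D := by
      rw [one_div_mul_eq_div, hD]
    rw [b1, b2, b3]
    simp only [← mul_div_assoc]
    rw [div_sub_div_same, ← add_div, div_eq_zero_iff]
    left
    linear_combination (((n:ℂ)+2) * (((n:ℂ)+1))) * key
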